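/- Every codeword c in the span C of the line vectors of the projective plane of order 3 has weight congruent to 0 or 1 modulo 3. -/

import Mathlib

/-- A finite projective plane of order `n`: `n^2+n+1` points and lines,
each line has `n+1` points, each point on `n+1` lines, two points span a
unique line, two lines meet in one point. -/
structure ProjPlane (n : ℕ) where
  P : Type
  [fintypeP : Fintype P]
  [decP : DecidableEq P]
  L : Finset (Finset P)
  cardP : Fintype.card P = n ^ 2 + n + 1
  cardL : L.card = n ^ 2 + n + 1
  line_card : ∀ ℓ ∈ L, ℓ.card = n + 1
  point_lines : ∀ p : P, (L.filter (fun ℓ => p ∈ ℓ)).card = n + 1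
  unique_line : ∀ p q : P, p ≠ q → ∃! ℓ, ℓ ∈ L ∧ p ∈ ℓ ∧ q ∈ ℓ
  lines_meet : ∀ ℓ ∈ L, ∀ m ∈ L, ℓ ≠ m → (ℓ ∩ m).card = 1

attribute [instance] ProjPlane.fintypeP ProjPlane.decP

/-- The characteristic vector of a line. -/
def lineVec (Pl : ProjPlane 3) (ℓ : Finset Pl.P) : Pl.P → ZMod 3 :=
  fun p => if p ∈ ℓ then 1 else 0

/-- The F₃-span of the characteristic vectors of the lines. -/
def lineCode (Pl : ProjPlane 3) : Submodule (ZMod 3) (Pl.P → ZMod 3) :=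
  Submodule.span (ZMod 3) (lineVec Pl '' ↑Pl.L)

/-- The weight of a codeword: its number of nonzero coordinates. -/
def wt {Pl : ProjPlane 3} (c : Pl.P → ZMod 3) : ℕ :=
  (Finset.univ.filter fun p => c p ≠ 0).card

/-- The dot product of two line vectors is always 1. -/
lemma lineVec_dot (Pl : ProjPlane 3) {ℓ m : Finset Pl.P} (hℓ : ℓ ∈ Pl.L)
    (hm : m ∈ Pl.L) : ∑ p, lineVec Pl ℓ p * lineVec Pl m p = 1 := by
  have h1 : ∑ p, lineVec Pl ℓ p * lineVec Pl m p
      = ((ℓ ∩ m).card : ZMod 3) := by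
    have hterm : ∀ p, lineVec Pl ℓ p * lineVec Pl m p
        = if p ∈ ℓ ∩ m then (1 : ZMod 3) else 0 := by
      intro p
      unfold lineVec
      by_cases h : p ∈ ℓ <;> by_cases h' : p ∈ m <;> simp_all
    rw [Finset.sum_congr rfl fun p _ => hterm p]
    simp only [Finset.sum_ite_mem, Finset.univ_inter, Finset.sum_const,
      nsmul_eq_mul, mul_one]
  rw [h1]
  by_cases h : ℓ = m
  · subst h
    rw [Finset.inter_self, Pl.line_card ℓ hℓ]
    decide
  · rw [Pl.lines_meet ℓ hℓ m hm h]
    decide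

/-- Every codeword of `C` has weight ≡ 0 or 1 (mod 3). -/
theorem stmt6 (Pl : ProjPlane 3) (c : Pl.P → ZMod 3) (hc : c ∈ lineCode Pl) :
    wt c % 3 = 0 ∨ wt c % 3 = 1 := by
  classical
  have himg : (lineVec Pl '' ↑Pl.L) = ↑(Pl.L.image (lineVec Pl)) := by
    simp [Finset.coe_image]
  rw [lineCode, himg, Submodule.mem_span_finset] at hc
  obtain ⟨f, -, hf⟩ := hc
  set T := Pl.L.image (lineVec Pl) with hT
  have hdot : ∀ v ∈ T, ∀ w ∈ T, ∑ p, v p * w p = 1 := by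
    intro v hv w hw
    obtain ⟨ℓ, hℓ, rfl⟩ := Finset.mem_image.mp hv
    obtain ⟨m, hm, rfl⟩ := Finset.mem_image.mp hw
    exact lineVec_dot Pl hℓ hm
  have hc' : ∀ p, c p = ∑ v ∈ T, f v * v p := by
    intro p
    rw [← hf]
    simp [Finset.sum_apply]
  have hsq : ∑ p, c p * c p = (∑ v ∈ T, f v) ^ 2 := by
    have step1 : ∑ p, c p * c p
        = ∑ p, ∑ v ∈ T, ∑ w ∈ T, (f v * f w) * (v p * w p) := by
      refine Finset.sum_congr rfl fun p _ => ?_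
      rw [hc' p, Finset.sum_mul_sum]
      exact Finset.sum_congr rfl fun v _ => Finset.sum_congr rfl fun w _ => by
        ring
    have step2 : ∑ p, ∑ v ∈ T, ∑ w ∈ T, (f v * f w) * (v p * w p)
        = ∑ v ∈ T, ∑ w ∈ T, (f v * f w) * ∑ p, v p * w p := by
      rw [Finset.sum_comm]
      refine Finset.sum_congr rfl fun v _ => ?_
      rw [Finset.sum_comm]
      refine Finset.sum_congr rfl fun w _ => ?_
      rw [Finset.mul_sum]
    rw [step1, step2]
    rw [Finset.sum_congr rfl (fun v hv => Finset.sum_congr rfl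
      (fun w hw => by rw [hdot v hv w hw, mul_one]))]
    rw [sq, Finset.sum_mul_sum]
  have hwt : ((wt c : ℕ) : ZMod 3) = ∑ p, c p * c p := by
    rw [← Finset.sum_filter_add_sum_filter_not Finset.univ (fun p => c p ≠ 0)]
    have h2 : ∀ p ∈ Finset.univ.filter (fun p => ¬ c p ≠ 0), c p * c p = 0 := by
      intro p hp
      simp only [Finset.mem_filter, not_not] at hp
      rw [hp.2, mul_zero]
    rw [Finset.sum_congr rfl h2, Finset.sum_const, smul_zero, add_zero]
    have h1 : ∀ p ∈ Finset.univ.filter (fun p => c p ≠ 0), c p * c p = 1 := by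
      intro p hp
      simp only [Finset.mem_filter] at hp
      have hx : ∀ x : ZMod 3, x ≠ 0 → x * x = 1 := by decide
      exact hx _ hp.2
    rw [Finset.sum_congr rfl h1, Finset.sum_const, wt, nsmul_eq_mul, mul_one]
  set s := ∑ v ∈ T, f v with hs
  have hval : ((wt c : ℕ) : ZMod 3) = s ^ 2 := by rw [hwt, hsq]
  have h3 : (wt c) % 3 = (s ^ 2).val := by
    have := ZMod.val_natCast (n := 3) (wt c)
    rw [hval] at this
    omega
  rw [h3]
  have hfin : ∀ t : ZMod 3, (t ^ 2).val = 0 ∨ (t ^ 2).val = 1 := by decide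
  exact hfin s
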